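/- Let s, α, t be real numbers with cos α ≠ 0, and let H = s • !![Complex.I * Real.sin α, 1; 1, -Complex.I * Real.sin α]. Then the matrix exponential of the evolution satisfies exp(−Complex.I · t • H) = (1/cos α) • !![cos(s·t·cos α − α), −Complex.I·sin(s·t·cos α); −Complex.I·sin(s·t·cos α), cos(s·t·cos α + α)]. -/

import Mathlib

open Matrix Complex

noncomputable section

/-- The PT-symmetric Hamiltonian `H = s • !![i sin α, 1; 1, -i sin α]`. -/
def Hpt (s α : ℝ) : Matrix (Fin 2) (Fin 2) ℂ :=
  (s : ℂ) • !![Complex.I * Real.sin α, 1; 1, -Complex.I * Real.sin α]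

/-- Closed form of the (non-unitary) time evolution operator generated by
the PT-symmetric Hamiltonian in the symmetry-unbroken phase:
`exp (-i t H) = (1/cos α) • !![cos(s t cos α - α), -i sin(s t cos α);
-i sin(s t cos α), cos(s t cos α + α)]`. -/
theorem stmt2 (s α t : ℝ) (hc : Real.cos α ≠ 0) :
    NormedSpace.exp ((-(Complex.I * (t : ℂ))) • Hpt s α) =
      ((Real.cos α : ℂ))⁻¹ •
        !![(Real.cos (s * t * Real.cos α - α) : ℂ),
            -Complex.I * Real.sin (s * t * Real.cos α);
           -Complex.I * Real.sin (s * t * Real.cos α),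
            (Real.cos (s * t * Real.cos α + α) : ℂ)] := by
  obtain ⟨γ, hγ⟩ : ∃ γ : ℂ, γ = (Real.cos α : ℂ) := ⟨_, rfl⟩
  obtain ⟨σ, hσ⟩ : ∃ σ : ℂ, σ = (Real.sin α : ℂ) := ⟨_, rfl⟩
  obtain ⟨θ, hθ⟩ : ∃ θ : ℝ, θ = s * t * Real.cos α := ⟨_, rfl⟩
  have hγ0 : γ ≠ 0 := by rw [hγ]; exact_mod_cast hc
  have hpy : σ ^ 2 + γ ^ 2 = 1 := by
    rw [hγ, hσ]
    norm_cast
    exact Real.sin_sq_add_cos_sq α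
  obtain ⟨P, hP⟩ : ∃ P : Matrix (Fin 2) (Fin 2) ℂ,
      P = !![1, 1; γ - Complex.I * σ, -γ - Complex.I * σ] := ⟨_, rfl⟩
  obtain ⟨Q, hQ⟩ : ∃ Q : Matrix (Fin 2) (Fin 2) ℂ,
      Q = (-(2 * γ))⁻¹ • !![-γ - Complex.I * σ, -1; -(γ - Complex.I * σ), 1] := ⟨_, rfl⟩
  obtain ⟨D, hD⟩ : ∃ D : Matrix (Fin 2) (Fin 2) ℂ,
      D = diagonal ![(-θ : ℂ) * Complex.I, (θ : ℂ) * Complex.I] := ⟨_, rfl⟩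
  have h2γ : -(2 * γ) ≠ 0 := by simpa using hγ0
  have hPQ : P * Q = 1 := by
    ext i j
    fin_cases i <;> fin_cases j <;>
      simp [hP, hQ, Matrix.mul_apply, Fin.sum_univ_succ, Matrix.one_apply] <;>
      field_simp <;> ring
  have hQP : Q * P = 1 := by
    ext i j
    fin_cases i <;> fin_cases j <;>
      simp [hP, hQ, Matrix.mul_apply, Fin.sum_univ_succ, Matrix.one_apply] <;>
      field_simp <;> ring
  have hAP : ((-(Complex.I * (t : ℂ))) • Hpt s α) * P = P * D := by
    ext i j
    fin_cases i <;> fin_cases j <;>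
      simp [hP, hD, Hpt, Matrix.mul_apply, Fin.sum_univ_succ, hθ]
    all_goals push_cast
    all_goals
      rw [show Complex.cos (α : ℂ) = γ by rw [hγ, Complex.ofReal_cos],
        show Complex.sin (α : ℂ) = σ by rw [hσ, Complex.ofReal_sin]]
    all_goals try ring
    all_goals linear_combination (-(Complex.I * (t : ℂ) * (s : ℂ) * σ ^ 2)) * Complex.I_sq + (Complex.I * (t : ℂ) * (s : ℂ)) * hpy
  have hA : (-(Complex.I * (t : ℂ))) • Hpt s α = P * D * Q := by
    calc (-(Complex.I * (t : ℂ))) • Hpt s α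
        = ((-(Complex.I * (t : ℂ))) • Hpt s α) * (P * Q) := by rw [hPQ, mul_one]
      _ = (((-(Complex.I * (t : ℂ))) • Hpt s α) * P) * Q := by rw [mul_assoc]
      _ = P * D * Q := by rw [hAP]
  set U : (Matrix (Fin 2) (Fin 2) ℂ)ˣ := ⟨P, Q, hPQ, hQP⟩ with hU
  have hconj : NormedSpace.exp ((-(Complex.I * (t : ℂ))) • Hpt s α)
      = P * NormedSpace.exp D * Q := by
    rw [hA]
    exact Matrix.exp_units_conj U D
  obtain ⟨E, hE⟩ : ∃ E : Matrix (Fin 2) (Fin 2) ℂ,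
      E = diagonal ![Complex.cos θ - Complex.I * Complex.sin θ,
                     Complex.cos θ + Complex.I * Complex.sin θ] := ⟨_, rfl⟩
  have hv : NormedSpace.exp (![(-θ : ℂ) * Complex.I, (θ : ℂ) * Complex.I] : Fin 2 → ℂ)
      = ![Complex.cos θ - Complex.I * Complex.sin θ,
          Complex.cos θ + Complex.I * Complex.sin θ] := by
    rw [Pi.exp_def]
    funext i
    fin_cases i <;> simp only [Fin.zero_eta, Fin.mk_one, Matrix.cons_val_zero,
      Matrix.cons_val_one, Matrix.head_cons, ← Complex.exp_eq_exp_ℂ]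
    · rw [Complex.exp_mul_I, Complex.cos_neg, Complex.sin_neg]
      ring
    · rw [Complex.exp_mul_I]
      ring
  have hexpD : NormedSpace.exp D = E := by
    rw [hD, hE, Matrix.exp_diagonal, hv]
  obtain ⟨R, hR⟩ : ∃ R : Matrix (Fin 2) (Fin 2) ℂ,
      R = !![(Real.cos (θ - α) : ℂ), -Complex.I * Real.sin θ;
             -Complex.I * Real.sin θ, (Real.cos (θ + α) : ℂ)] := ⟨_, rfl⟩
  have hcs : Real.cos (θ - α) = Real.cos θ * Real.cos α + Real.sin θ * Real.sin α :=
    Real.cos_sub θ α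
  have hca : Real.cos (θ + α) = Real.cos θ * Real.cos α - Real.sin θ * Real.sin α :=
    Real.cos_add θ α
  have hRP : (γ⁻¹ • R) * P = P * E := by
    ext i j
    fin_cases i <;> fin_cases j <;>
      simp [hP, hE, hR, Matrix.mul_apply, Fin.sum_univ_succ, hcs, hca]
    all_goals push_cast
    all_goals
      rw [show Complex.cos (α : ℂ) = γ by rw [hγ, Complex.ofReal_cos],
        show Complex.sin (α : ℂ) = σ by rw [hσ, Complex.ofReal_sin]]
    all_goals field_simp
    all_goals try ring
    try any_goals linear_combination (Complex.sin (θ : ℂ) * σ) * Complex.I_sq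
    try any_goals linear_combination (Complex.I * Complex.sin (θ : ℂ) * γ) * hpy + (-(Complex.sin (θ : ℂ) * γ ^ 2 * σ)) * Complex.I_sq
    all_goals first
      | linear_combination (Complex.I * Complex.sin (θ : ℂ) * γ) * hpy + (Complex.sin (θ : ℂ) * γ ^ 2 * σ) * Complex.I_sq
      | linear_combination (Complex.I * Complex.sin (θ : ℂ)) * hpy - (Complex.sin (θ : ℂ) * σ * γ) * Complex.I_sq
      | linear_combination (Complex.I * Complex.sin (θ : ℂ)) * hpy + (Complex.sin (θ : ℂ) * σ * γ) * Complex.I_sq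
  have key : P * E * Q = γ⁻¹ • R := by
    calc P * E * Q = ((γ⁻¹ • R) * P) * Q := by rw [hRP]
      _ = (γ⁻¹ • R) * (P * Q) := by rw [mul_assoc]
      _ = γ⁻¹ • R := by rw [hPQ, mul_one]
  rw [hconj, hexpD, key, hγ, hR, hθ]
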